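/- For every t ∈ ℤ[ω], the element t̄·t (where t̄ is the complex conjugate of t) is congruent modulo 2ℤ[ω] to exactly one of 0, 1, or ω + ω³. That is, exactly one of (t̄t)/2 ∈ ℤ[ω], (t̄t − 1)/2 ∈ ℤ[ω], or (t̄t − ω − ω³)/2 ∈ ℤ[ω] holds. -/
import Mathlib


noncomputable section

/-- The eighth root of unity `ω = e^{iπ/4} = (1+i)/√2`. -/
def ω : ℂ := (1 + Complex.I) / Real.sqrt 2

/-- A rational number is dyadic if it has the form `a / 2^n` with `a ∈ ℤ`, `n ∈ ℕ`. -/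
def IsDyadic (q : ℚ) : Prop := ∃ (a : ℤ) (n : ℕ), q = a / 2 ^ n

/-- Membership in the ring `𝔻[ω] = ℤ[1/√2, i]`: complex numbers of the form
`aω³ + bω² + cω + d` with `a, b, c, d` dyadic rationals. -/
def inDω (t : ℂ) : Prop :=
  ∃ a b c d : ℚ, IsDyadic a ∧ IsDyadic b ∧ IsDyadic c ∧ IsDyadic d ∧
    t = (a : ℂ) * ω ^ 3 + (b : ℂ) * ω ^ 2 + (c : ℂ) * ω + (d : ℂ)

/-- Membership in the ring `ℤ[ω]`: complex numbers of the form
`aω³ + bω² + cω + d` with `a, b, c, d ∈ ℤ`. -/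
def inZω (t : ℂ) : Prop :=
  ∃ a b c d : ℤ, t = (a : ℂ) * ω ^ 3 + (b : ℂ) * ω ^ 2 + (c : ℂ) * ω + (d : ℂ)


lemma hs2 : ((Real.sqrt 2 : ℝ) : ℂ)^2 = 2 := by
  norm_cast
  rw [Real.sq_sqrt]; norm_num

lemma hs0 : ((Real.sqrt 2 : ℝ) : ℂ) ≠ 0 := by
  intro h
  have := hs2
  rw [h] at this
  norm_num at this

lemma hω2 : ω ^ 2 = Complex.I := by
  rw [ω, div_pow, hs2]
  have := Complex.I_sq
  linear_combination (1/2 : ℂ) * this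

lemma hω4 : ω ^ 4 = -1 := by
  have : ω ^ 4 = (ω^2)^2 := by ring
  rw [this, hω2, Complex.I_sq]

lemma hconj : (starRingEnd ℂ) ω = -ω^3 := by
  have h3 : ω^3 = ω^2 * ω := by ring
  rw [h3, hω2, ω]
  rw [map_div₀, map_add, map_one, Complex.conj_I, Complex.conj_ofReal]
  field_simp
  linear_combination Complex.I_sq

lemma sqrt2_lin (p q : ℚ) (h : (p:ℝ) + q * Real.sqrt 2 = 0) : p = 0 ∧ q = 0 := by
  by_cases hq : q = 0
  · subst hq
    simp at h
    exact ⟨by exact_mod_cast h, rfl⟩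
  · exfalso
    apply irrational_sqrt_two
    refine ⟨-p/q, ?_⟩
    push_cast
    have hq' : (q:ℝ) ≠ 0 := by exact_mod_cast hq
    field_simp
    linarith [h]

lemma homega1 : ((Real.sqrt 2:ℝ):ℂ) * ω = 1 + Complex.I := by
  rw [ω]; field_simp

lemma homega3 : ((Real.sqrt 2:ℝ):ℂ) * ω^3 = -1 + Complex.I := by
  have h : ((Real.sqrt 2:ℝ):ℂ) * ω^3 = ω^2 * (((Real.sqrt 2:ℝ):ℂ) * ω) := by ring
  rw [h, hω2, homega1]
  linear_combination Complex.I_sq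

lemma indep (a b c d : ℚ) (h : (a:ℂ)*ω^3 + (b:ℂ)*ω^2 + (c:ℂ)*ω + (d:ℂ) = 0) :
    a = 0 ∧ b = 0 ∧ c = 0 ∧ d = 0 := by
  have heq : (((c - a : ℚ) : ℝ) + ((d:ℚ):ℝ) * (Real.sqrt 2:ℝ) : ℂ)
      + ((((a + c : ℚ):ℝ) + ((b:ℚ):ℝ) * (Real.sqrt 2:ℝ) :ℝ):ℂ) * Complex.I = 0 := by
    push_cast
    linear_combination ((Real.sqrt 2:ℝ):ℂ)*h - (a:ℂ)*homega3 - (c:ℂ)*homega1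
      - (b:ℂ)*((Real.sqrt 2:ℝ):ℂ)*hω2
  have hre := congrArg Complex.re heq
  have him := congrArg Complex.im heq
  simp [Complex.add_re, Complex.add_im] at hre him
  obtain ⟨h1, h2⟩ := sqrt2_lin (c - a) d (by push_cast; linarith [hre])
  obtain ⟨h3, h4⟩ := sqrt2_lin (a + c) b (by push_cast; linarith [him])
  constructor
  · linarith [h1, h3]
  constructor
  · exact h4
  constructor
  · linarith [h1, h3]
  · exact h2

lemma half_mem (p q r s : ℤ) :
    inZω (((p:ℂ)*ω^3 + (q:ℂ)*ω^2 + (r:ℂ)*ω + (s:ℂ))/2) ↔ (2 ∣ p ∧ 2 ∣ q ∧ 2 ∣ r ∧ 2 ∣ s) := by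
  constructor
  · rintro ⟨a, b, c, d, h⟩
    have h0 : (((p:ℚ)/2 - a : ℚ):ℂ)*ω^3 + (((q:ℚ)/2 - b : ℚ):ℂ)*ω^2
        + (((r:ℚ)/2 - c : ℚ):ℂ)*ω + (((s:ℚ)/2 - d : ℚ):ℂ) = 0 := by
      push_cast
      linear_combination h
    obtain ⟨h1, h2, h3, h4⟩ := indep _ _ _ _ h0
    refine ⟨⟨a, ?_⟩, ⟨b, ?_⟩, ⟨c, ?_⟩, ⟨d, ?_⟩⟩
    · exact_mod_cast (show ((p:ℚ)) = 2 * a by linarith)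
    · exact_mod_cast (show ((q:ℚ)) = 2 * b by linarith)
    · exact_mod_cast (show ((r:ℚ)) = 2 * c by linarith)
    · exact_mod_cast (show ((s:ℚ)) = 2 * d by linarith)
  · rintro ⟨⟨a, ha⟩, ⟨b, hb⟩, ⟨c, hc⟩, ⟨d, hd⟩⟩
    exact ⟨a, b, c, d, by subst ha hb hc hd; push_cast; ring⟩

lemma key (a b c d : ℤ) :
    (starRingEnd ℂ) ((a:ℂ)*ω^3 + (b:ℂ)*ω^2 + (c:ℂ)*ω + (d:ℂ))
      * ((a:ℂ)*ω^3 + (b:ℂ)*ω^2 + (c:ℂ)*ω + (d:ℂ))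
    = ((a*d - a*b - b*c - c*d : ℤ):ℂ)*ω^3 + ((0:ℤ):ℂ)*ω^2
      + ((a*b + b*c + c*d - a*d : ℤ):ℂ)*ω + ((a^2+b^2+c^2+d^2 : ℤ):ℂ) := by
  have hc : (starRingEnd ℂ) ((a:ℂ)*ω^3 + (b:ℂ)*ω^2 + (c:ℂ)*ω + (d:ℂ))
      = (a:ℂ)*(-ω^3)^3 + (b:ℂ)*(-ω^3)^2 + (c:ℂ)*(-ω^3) + (d:ℂ) := by
    simp [map_add, map_mul, map_pow, hconj]
  rw [hc]
  push_cast
  linear_combination (-(a:ℂ)^2*ω^8 - a*b*ω^7 - a*c*ω^6 + (a*b - a*d)*ω^5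
    + ((a:ℂ)^2 + b^2)*ω^4 + (a*b + b*c)*ω^3 + b*d*ω^2 + (a*d - a*b - b*c)*ω
    - ((a:ℂ)^2 + b^2 + c^2)) * hω4

lemma parity_zmod : ∀ a b c d : ZMod 2,
    a*d - a*b - b*c - c*d ≠ 0 → a^2 + b^2 + c^2 + d^2 = 0 := by decide

/-- For every `t ∈ ℤ[ω]`, the element `t̄·t` is congruent modulo `2ℤ[ω]` to exactly one of
`0`, `1`, or `ω + ω³`. -/
theorem stmt3 (t : ℂ) (ht : inZω t) :
    (inZω ((starRingEnd ℂ) t * t / 2)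
        ∧ ¬ inZω (((starRingEnd ℂ) t * t - 1) / 2)
        ∧ ¬ inZω (((starRingEnd ℂ) t * t - (ω + ω ^ 3)) / 2))
    ∨ (¬ inZω ((starRingEnd ℂ) t * t / 2)
        ∧ inZω (((starRingEnd ℂ) t * t - 1) / 2)
        ∧ ¬ inZω (((starRingEnd ℂ) t * t - (ω + ω ^ 3)) / 2))
    ∨ (¬ inZω ((starRingEnd ℂ) t * t / 2)
        ∧ ¬ inZω (((starRingEnd ℂ) t * t - 1) / 2)
        ∧ inZω (((starRingEnd ℂ) t * t - (ω + ω ^ 3)) / 2)) := by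
  obtain ⟨a, b, c, d, rfl⟩ := ht
  have hkey := key a b c d
  set A : ℤ := a*d - a*b - b*c - c*d with hA
  set A' : ℤ := a*b + b*c + c*d - a*d with hA'
  set N : ℤ := a^2 + b^2 + c^2 + d^2 with hN
  have m0 : inZω ((starRingEnd ℂ) ((a:ℂ)*ω^3 + (b:ℂ)*ω^2 + (c:ℂ)*ω + (d:ℂ))
      * ((a:ℂ)*ω^3 + (b:ℂ)*ω^2 + (c:ℂ)*ω + (d:ℂ)) / 2)
      ↔ (2 ∣ A ∧ 2 ∣ (0:ℤ) ∧ 2 ∣ A' ∧ 2 ∣ N) := by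
    rw [hkey]; exact half_mem A 0 A' N
  have m1 : inZω (((starRingEnd ℂ) ((a:ℂ)*ω^3 + (b:ℂ)*ω^2 + (c:ℂ)*ω + (d:ℂ))
      * ((a:ℂ)*ω^3 + (b:ℂ)*ω^2 + (c:ℂ)*ω + (d:ℂ)) - 1) / 2)
      ↔ (2 ∣ A ∧ 2 ∣ (0:ℤ) ∧ 2 ∣ A' ∧ 2 ∣ (N - 1)) := by
    have e : ((starRingEnd ℂ) ((a:ℂ)*ω^3 + (b:ℂ)*ω^2 + (c:ℂ)*ω + (d:ℂ))
        * ((a:ℂ)*ω^3 + (b:ℂ)*ω^2 + (c:ℂ)*ω + (d:ℂ)) - 1)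
        = ((A:ℂ)*ω^3 + ((0:ℤ):ℂ)*ω^2 + ((A':ℤ):ℂ)*ω + ((N - 1 : ℤ):ℂ)) := by
      rw [hkey]; push_cast; ring
    rw [e]; exact half_mem A 0 A' (N - 1)
  have m2 : inZω (((starRingEnd ℂ) ((a:ℂ)*ω^3 + (b:ℂ)*ω^2 + (c:ℂ)*ω + (d:ℂ))
      * ((a:ℂ)*ω^3 + (b:ℂ)*ω^2 + (c:ℂ)*ω + (d:ℂ)) - (ω + ω^3)) / 2)
      ↔ (2 ∣ (A - 1) ∧ 2 ∣ (0:ℤ) ∧ 2 ∣ (A' - 1) ∧ 2 ∣ N) := by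
    have e : ((starRingEnd ℂ) ((a:ℂ)*ω^3 + (b:ℂ)*ω^2 + (c:ℂ)*ω + (d:ℂ))
        * ((a:ℂ)*ω^3 + (b:ℂ)*ω^2 + (c:ℂ)*ω + (d:ℂ)) - (ω + ω^3))
        = (((A - 1 : ℤ):ℂ)*ω^3 + ((0:ℤ):ℂ)*ω^2 + ((A' - 1 : ℤ):ℂ)*ω + ((N : ℤ):ℂ)) := by
      rw [hkey]; push_cast; ring
    rw [e]; exact half_mem (A - 1) 0 (A' - 1) N
  have hAN : ¬ (2 ∣ A) → 2 ∣ N := by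
    intro h
    have hA2 : ((A : ZMod 2)) ≠ 0 := by
      intro h0
      exact h (by exact_mod_cast (ZMod.intCast_zmod_eq_zero_iff_dvd A 2).mp h0)
    have hcast : ((A : ZMod 2)) = (a : ZMod 2)*(d:ZMod 2) - (a:ZMod 2)*(b:ZMod 2)
        - (b:ZMod 2)*(c:ZMod 2) - (c:ZMod 2)*(d:ZMod 2) := by push_cast [hA]; ring
    have hNcast : ((N : ZMod 2)) = (a : ZMod 2)^2 + (b:ZMod 2)^2 + (c:ZMod 2)^2 + (d:ZMod 2)^2 := by
      push_cast [hN]; ring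
    have := parity_zmod (a : ZMod 2) (b : ZMod 2) (c : ZMod 2) (d : ZMod 2) (by rw [← hcast]; exact hA2)
    have hN0 : ((N : ZMod 2)) = 0 := by rw [hNcast, this]
    exact_mod_cast (ZMod.intCast_zmod_eq_zero_iff_dvd N 2).mp hN0
  rw [m0, m1, m2]
  rcases Int.even_or_odd A with ⟨k, hk⟩ | ⟨k, hk⟩
  · rcases Int.even_or_odd N with ⟨l, hl⟩ | ⟨l, hl⟩
    · exact Or.inl ⟨⟨⟨k, by omega⟩, ⟨0, rfl⟩, ⟨-k, by omega⟩, ⟨l, by omega⟩⟩,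
        by rintro ⟨-, -, -, ⟨m, hm⟩⟩; omega,
        by rintro ⟨⟨m, hm⟩, -, -, -⟩; omega⟩
    · exact Or.inr (Or.inl ⟨by rintro ⟨-, -, -, ⟨m, hm⟩⟩; omega,
        ⟨⟨k, by omega⟩, ⟨0, rfl⟩, ⟨-k, by omega⟩, ⟨l, by omega⟩⟩,
        by rintro ⟨⟨m, hm⟩, -, -, -⟩; omega⟩)
  · have hNe : 2 ∣ N := hAN (by omega)
    obtain ⟨l, hl⟩ := hNe
    exact Or.inr (Or.inr ⟨by rintro ⟨⟨m, hm⟩, -, -, -⟩; omega,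
      by rintro ⟨⟨m, hm⟩, -, -, -⟩; omega,
      ⟨⟨k, by omega⟩, ⟨0, rfl⟩, ⟨-k - 1, by omega⟩, ⟨l, by omega⟩⟩⟩)
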